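/- Let c be a positive real number and n a positive integer with c·√n < n. Then for every natural number k with (n − c√n)/2 ≤ k ≤ (n + c√n)/2, the binomial coefficient satisfies C(n, k) ≥ e^{−1−c²} · 2^n/√n, where e is Euler's number. -/

import Mathlib

open Real

set_option maxHeartbeats 1000000

private lemma two_log_le {x : ℝ} (hx : 1 ≤ x) : 2 * Real.log x ≤ x - x⁻¹ := by
  have key : ∀ y : ℝ, y ≠ 0 → HasDerivAt (fun y : ℝ => y - y⁻¹ - 2 * Real.log y)
      (1 - (-(y^2)⁻¹) - 2 * y⁻¹) y := by
    intro y hy0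
    exact ((hasDerivAt_id y).sub (hasDerivAt_inv hy0)).sub
      ((Real.hasDerivAt_log hy0).const_mul (2:ℝ))
  have hmono : MonotoneOn (fun y : ℝ => y - y⁻¹ - 2 * Real.log y) (Set.Ici 1) := by
    apply monotoneOn_of_deriv_nonneg (convex_Ici 1)
    · intro y hy
      have hy0 : y ≠ 0 := by intro h; rw [Set.mem_Ici, h] at hy; linarith
      exact (key y hy0).continuousAt.continuousWithinAt
    · intro y hy
      rw [interior_Ici] at hy
      have hy0 : y ≠ 0 := by intro h; rw [Set.mem_Ioi, h] at hy; linarith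
      exact (key y hy0).differentiableAt.differentiableWithinAt
    · intro y hy
      rw [interior_Ici] at hy
      have hy1 : (1:ℝ) < y := hy
      have hy0 : y ≠ 0 := by linarith
      rw [(key y hy0).deriv]
      have h2 : (y^2)⁻¹ = y⁻¹ * y⁻¹ := by rw [sq, mul_inv]
      nlinarith [sq_nonneg (1 - y⁻¹)]
  have h0 := hmono (Set.mem_Ici.2 le_rfl) (Set.mem_Ici.2 hx) hx
  simp only [Real.log_one] at h0
  norm_num at h0
  linarith


private lemma log_ratio {a b : ℝ} (ha : 0 < a) (hab : a ≤ b) :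
    Real.log b - Real.log a ≤ (b - a) / Real.sqrt (a * b) := by
  have hb : 0 < b := lt_of_lt_of_le ha hab
  set p := Real.sqrt a with hp
  set q := Real.sqrt b with hq
  have hp0 : 0 < p := Real.sqrt_pos.2 ha
  have hq0 : 0 < q := Real.sqrt_pos.2 hb
  have hpq : p ≤ q := Real.sqrt_le_sqrt hab
  have hp2 : p ^ 2 = a := Real.sq_sqrt ha.le
  have hq2 : q ^ 2 = b := Real.sq_sqrt hb.le
  have hx : 1 ≤ q / p := (one_le_div hp0).2 hpq
  have hlog := two_log_le hx
  have hlq : Real.log (q / p) = Real.log q - Real.log p := Real.log_div hq0.ne' hp0.ne'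
  have hla : Real.log a = 2 * Real.log p := by
    rw [← hp2, Real.log_pow]; push_cast; ring
  have hlb : Real.log b = 2 * Real.log q := by
    rw [← hq2, Real.log_pow]; push_cast; ring
  have hsq : Real.sqrt (a * b) = p * q := Real.sqrt_mul ha.le b
  rw [hsq, hla, hlb]
  have hineq : q / p - (q / p)⁻¹ = (b - a) / (p * q) := by
    rw [← hp2, ← hq2]
    field_simp
  rw [hlq] at hlog
  linarith [hlog, hineq ▸ hlog]


private lemma step_exp {a b g D : ℝ} (ha : 0 < a) (hb : 0 < b) (hg : 0 < g)
    (hD : b - a ≤ D) (hD0 : 0 ≤ D) (hgab : g ^ 2 ≤ a * b) :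
    b * Real.exp (-(D / g)) ≤ a := by
  rcases le_or_gt b a with hba | hba
  · have h1 : Real.exp (-(D / g)) ≤ 1 := by
      rw [Real.exp_le_one_iff]
      have : 0 ≤ D / g := div_nonneg hD0 hg.le
      linarith
    nlinarith
  · have hab : a ≤ b := hba.le
    have hsab : g ≤ Real.sqrt (a * b) := by
      have := Real.sqrt_le_sqrt hgab
      rwa [Real.sqrt_sq hg.le] at this
    have hsab0 : 0 < Real.sqrt (a * b) := lt_of_lt_of_le hg hsab
    have h1 : Real.log b - Real.log a ≤ D / g := by
      calc Real.log b - Real.log a ≤ (b - a) / Real.sqrt (a * b) := log_ratio ha hab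
        _ ≤ (b - a) / g := by
          apply div_le_div_of_nonneg_left (by linarith) hg hsab
        _ ≤ D / g := by gcongr
    have h2 : Real.log b + (-(D / g)) ≤ Real.log a := by linarith
    calc b * Real.exp (-(D / g)) = Real.exp (Real.log b + (-(D / g))) := by
          rw [Real.exp_add, Real.exp_log hb]
      _ ≤ Real.exp (Real.log a) := Real.exp_le_exp.2 h2
      _ = a := Real.exp_log ha


private lemma chain (n m T : ℕ) (h1 : m + T ≤ n) (h2 : n ≤ 2 * m + 1) :
    ∀ t : ℕ, t ≤ T →
      (n.choose m : ℝ) * Real.exp (-((((t:ℝ)) ^ 2 - ((n:ℝ) - 2 * m) * t) /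
        Real.sqrt (((n:ℝ) + 1 - m - T) * ((m:ℝ) + T)))) ≤ (n.choose (m + t) : ℝ) := by
  intro t
  induction t with
  | zero => intro _; norm_num
  | succ t ih =>
    intro htT
    have htT' : t ≤ T := Nat.le_of_succ_le htT
    have ihh := ih htT'
    set g : ℝ := Real.sqrt (((n:ℝ) + 1 - m - T) * ((m:ℝ) + T)) with hgdef
    have hTpos : 1 ≤ T := le_trans (Nat.succ_le_succ (Nat.zero_le t)) htT
    have hmtn : m + t < n := by omega
    have hg : 0 < g := by
      apply Real.sqrt_pos.2
      apply mul_pos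
      · have : (m:ℝ) + T ≤ n := by exact_mod_cast h1
        linarith
      · have : (1:ℝ) ≤ (m:ℝ) + T := by exact_mod_cast Nat.add_le_add (Nat.zero_le m) hTpos
        linarith
    -- the new factor
    have ha : (0:ℝ) < (n:ℝ) - (m + t) := by
      have : ((m:ℝ) + t) < n := by exact_mod_cast hmtn
      linarith
    have hb : (0:ℝ) < (m:ℝ) + t + 1 := by positivity
    have hD0 : (0:ℝ) ≤ 2 * t + 1 - ((n:ℝ) - 2 * m) := by
      have : (n:ℝ) ≤ 2 * m + 1 := by exact_mod_cast h2
      have ht0 : (0:ℝ) ≤ (t:ℝ) := Nat.cast_nonneg t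
      linarith
    have hgab : g ^ 2 ≤ ((n:ℝ) - (m + t)) * ((m:ℝ) + t + 1) := by
      have hsq : g ^ 2 = ((n:ℝ) + 1 - m - T) * ((m:ℝ) + T) := by
        rw [hgdef]
        apply Real.sq_sqrt
        apply mul_nonneg
        · have : (m:ℝ) + T ≤ n := by exact_mod_cast h1
          linarith
        · positivity
      rw [hsq]
      have c1 : (t:ℝ) + 1 ≤ T := by exact_mod_cast htT
      have c2 : (m:ℝ) + T ≤ n := by exact_mod_cast h1
      have c3 : (n:ℝ) ≤ 2 * m + 1 := by exact_mod_cast h2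
      nlinarith [mul_nonneg (by linarith : (0:ℝ) ≤ (T:ℝ) - t - 1)
        (by linarith : (0:ℝ) ≤ 2 * (m:ℝ) + T + t - n)]
    have hstep := step_exp ha hb hg (by linarith) hD0 hgab
    -- choose identity
    have hid : ((n.choose (m + t + 1) : ℝ)) * ((m:ℝ) + t + 1) =
        (n.choose (m + t) : ℝ) * ((n:ℝ) - (m + t)) := by
      have := Nat.choose_succ_right_eq n (m + t)
      have hcast : ((n.choose (m+t+1) * (m+t+1) : ℕ) : ℝ) = ((n.choose (m+t) * (n - (m+t)) : ℕ) : ℝ) := by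
        exact_mod_cast congrArg (Nat.cast : ℕ → ℝ) this
      push_cast [Nat.cast_sub hmtn.le] at hcast
      convert hcast using 1 <;> push_cast <;> ring
    have hCpos : (0:ℝ) < (n.choose (m + t) : ℝ) := by
      exact_mod_cast Nat.choose_pos (by omega : m + t ≤ n)
    have hCm : (0:ℝ) ≤ (n.choose m : ℝ) := Nat.cast_nonneg _
    -- exponent split
    have hsplit : Real.exp (-((((t:ℝ)+1) ^ 2 - ((n:ℝ) - 2 * m) * ((t:ℝ)+1)) / g)) =
        Real.exp (-((((t:ℝ)) ^ 2 - ((n:ℝ) - 2 * m) * t) / g)) *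
        Real.exp (-((2 * (t:ℝ) + 1 - ((n:ℝ) - 2 * m)) / g)) := by
      rw [← Real.exp_add]
      congr 1
      field_simp
      ring
    have goalcast : (((t:ℕ)+1 : ℕ) : ℝ) = (t:ℝ) + 1 := by push_cast; ring
    push_cast
    rw [hsplit]
    have step1 : (n.choose m : ℝ) * Real.exp (-((((t:ℝ)) ^ 2 - ((n:ℝ) - 2 * m) * t) / g)) *
        Real.exp (-((2 * (t:ℝ) + 1 - ((n:ℝ) - 2 * m)) / g)) ≤
        (n.choose (m + t) : ℝ) * Real.exp (-((2 * (t:ℝ) + 1 - ((n:ℝ) - 2 * m)) / g)) := by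
      apply mul_le_mul_of_nonneg_right _ (Real.exp_nonneg _)
      exact_mod_cast ihh
    have step2 : (n.choose (m + t) : ℝ) * Real.exp (-((2 * (t:ℝ) + 1 - ((n:ℝ) - 2 * m)) / g)) ≤
        (n.choose (m + t + 1) : ℝ) := by
      rw [← mul_le_mul_iff_left₀ hb]
      calc (n.choose (m + t) : ℝ) * Real.exp (-((2 * (t:ℝ) + 1 - ((n:ℝ) - 2 * m)) / g)) * ((m:ℝ) + t + 1)
          = (n.choose (m + t) : ℝ) * (((m:ℝ) + t + 1) * Real.exp (-((2 * (t:ℝ) + 1 - ((n:ℝ) - 2 * m)) / g))) := by ring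
        _ ≤ (n.choose (m + t) : ℝ) * ((n:ℝ) - (m + t)) := by
            apply mul_le_mul_of_nonneg_left hstep hCpos.le
        _ = (n.choose (m + t + 1) : ℝ) * ((m:ℝ) + t + 1) := hid.symm
    calc (n.choose m : ℝ) * (Real.exp (-((((t:ℝ)) ^ 2 - ((n:ℝ) - 2 * m) * t) / g)) *
            Real.exp (-((2 * (t:ℝ) + 1 - ((n:ℝ) - 2 * m)) / g)))
        = (n.choose m : ℝ) * Real.exp (-((((t:ℝ)) ^ 2 - ((n:ℝ) - 2 * m) * t) / g)) *
            Real.exp (-((2 * (t:ℝ) + 1 - ((n:ℝ) - 2 * m)) / g)) := by ring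
      _ ≤ (n.choose (m + t) : ℝ) * Real.exp (-((2 * (t:ℝ) + 1 - ((n:ℝ) - 2 * m)) / g)) := step1
      _ ≤ (n.choose (m + t + 1) : ℝ) := step2


private lemma centralBinom_lower (m : ℕ) (hm : 1 ≤ m) :
    (4:ℝ) ^ m ≤ (Nat.centralBinom m : ℝ) * (2 * Real.sqrt m) := by
  induction m with
  | zero => omega
  | succ m ih =>
    rcases Nat.eq_or_lt_of_le hm with h1 | h1
    · have hm0 : m = 0 := by omega
      subst hm0
      have hcb : Nat.centralBinom 1 = 2 := by decide
      norm_num [hcb]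
    · have hm1 : 1 ≤ m := by omega
      have ihh := ih hm1
      have hrec : ((m:ℝ) + 1) * (Nat.centralBinom (m+1) : ℝ) =
          2 * (2 * m + 1) * (Nat.centralBinom m : ℝ) := by
        exact_mod_cast congrArg (Nat.cast : ℕ → ℝ) (Nat.succ_mul_centralBinom_succ m)
      have hsm : (0:ℝ) < Real.sqrt m := Real.sqrt_pos.2 (by exact_mod_cast hm1)
      have hsm1 : (0:ℝ) < Real.sqrt (m+1) := Real.sqrt_pos.2 (by positivity)
      have hm2 : Real.sqrt m ^ 2 = m := Real.sq_sqrt (by positivity)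
      have hm12 : Real.sqrt ((m:ℝ)+1) ^ 2 = (m:ℝ)+1 := Real.sq_sqrt (by positivity)
      -- key: 2(m+1)√m ≤ (2m+1)√(m+1)
      have key : 2 * ((m:ℝ) + 1) * Real.sqrt m ≤ (2 * m + 1) * Real.sqrt ((m:ℝ)+1) := by
        have hsum : (0:ℝ) < (2*(m:ℝ)+1) * Real.sqrt ((m:ℝ)+1) + 2*((m:ℝ)+1)*Real.sqrt m := by
          positivity
        nlinarith [hsum, hm2, hm12, mul_pos hsm hsm1]
      have hCB : (0:ℝ) < (Nat.centralBinom m : ℝ) := by exact_mod_cast Nat.centralBinom_pos m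
      -- multiply ih by 2(2m+1)√(m+1) ≥ 0 etc.
      -- target: 4^(m+1) ≤ CB(m+1) * (2 * √(m+1))
      have hmain : ((m:ℝ)+1) * Real.sqrt m * ((4:ℝ) ^ (m+1)) ≤
          ((m:ℝ)+1) * Real.sqrt m * ((Nat.centralBinom (m+1) : ℝ) * (2 * Real.sqrt ((m:ℝ)+1))) := by
        have e1 : ((m:ℝ)+1) * Real.sqrt m * ((Nat.centralBinom (m+1) : ℝ) * (2 * Real.sqrt ((m:ℝ)+1))) =
            (2 * (2 * m + 1) * (Nat.centralBinom m : ℝ)) * (2 * Real.sqrt ((m:ℝ)+1) * Real.sqrt m) := by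
          rw [← hrec]; ring
        rw [e1]
        have e2 : (2 * (2 * (m:ℝ) + 1) * (Nat.centralBinom m : ℝ)) * (2 * Real.sqrt ((m:ℝ)+1) * Real.sqrt m) =
            ((Nat.centralBinom m : ℝ) * (2 * Real.sqrt m)) * (2 * ((2 * (m:ℝ) + 1) * Real.sqrt ((m:ℝ)+1))) := by
          ring
        rw [e2]
        calc ((m:ℝ)+1) * Real.sqrt m * ((4:ℝ) ^ (m+1))
            = ((4:ℝ)^m) * (4 * (((m:ℝ)+1) * Real.sqrt m)) := by ring
          _ ≤ ((Nat.centralBinom m : ℝ) * (2 * Real.sqrt m)) * (4 * (((m:ℝ)+1) * Real.sqrt m)) := by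
              apply mul_le_mul_of_nonneg_right ihh
              positivity
          _ ≤ ((Nat.centralBinom m : ℝ) * (2 * Real.sqrt m)) * (2 * ((2 * (m:ℝ) + 1) * Real.sqrt ((m:ℝ)+1))) := by
              apply mul_le_mul_of_nonneg_left _ (by positivity)
              linarith
      have hpos : (0:ℝ) < ((m:ℝ)+1) * Real.sqrt m := by positivity
      have hres := (mul_le_mul_iff_right₀ hpos).1 hmain
      push_cast
      push_cast at hres
      exact hres



private lemma choose_half_lower (n : ℕ) (hn : 1 ≤ n) :
    (2:ℝ) ^ n ≤ (n.choose (n / 2) : ℝ) * (2 * Real.sqrt n) := by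
  rcases Nat.even_or_odd n with ⟨m, hm⟩ | ⟨m, hm⟩
  · subst hm
    have hm1 : 1 ≤ m := by omega
    have hhalf : (m + m) / 2 = m := by omega
    rw [hhalf]
    have hcb : (m + m).choose m = Nat.centralBinom m := by
      rw [Nat.centralBinom_eq_two_mul_choose, two_mul]
    rw [hcb]
    have h1 := centralBinom_lower m hm1
    have h2 : Real.sqrt (m:ℝ) ≤ Real.sqrt ((m:ℝ) + m) := by
      apply Real.sqrt_le_sqrt
      have : (0:ℝ) ≤ (m:ℝ) := Nat.cast_nonneg m
      linarith
    have hcast : ((m + m : ℕ) : ℝ) = (m:ℝ) + m := by push_cast; ring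
    rw [hcast]
    calc (2:ℝ) ^ (m + m) = 4 ^ m := by rw [← two_mul, pow_mul]; norm_num
      _ ≤ (Nat.centralBinom m : ℝ) * (2 * Real.sqrt m) := h1
      _ ≤ (Nat.centralBinom m : ℝ) * (2 * Real.sqrt ((m:ℝ) + m)) := by
          apply mul_le_mul_of_nonneg_left (by linarith) (Nat.cast_nonneg _)
  · subst hm
    have hhalf : (2 * m + 1) / 2 = m := by omega
    rw [hhalf]
    have hkey : 2 * ((2 * m + 1).choose m) = Nat.centralBinom (m + 1) := by
      rw [Nat.centralBinom_eq_two_mul_choose]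
      have : 2 * (m + 1) = (2 * m + 1) + 1 := by ring
      rw [this]
      rw [Nat.choose_succ_succ' (2 * m + 1) m]
      rw [Nat.choose_symm_half m]
      ring
    have h1 := centralBinom_lower (m + 1) (by omega)
    have hC : (2:ℝ) * ((2 * m + 1).choose m : ℝ) = (Nat.centralBinom (m + 1) : ℝ) := by
      exact_mod_cast congrArg (Nat.cast : ℕ → ℝ) hkey
    have h2 : Real.sqrt ((m:ℝ) + 1) ≤ Real.sqrt ((2 * m + 1 : ℕ) : ℝ) := by
      apply Real.sqrt_le_sqrt; push_cast; linarith
    have hcast1 : (((m:ℕ) + 1 : ℕ) : ℝ) = (m:ℝ) + 1 := by push_cast; ring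
    rw [hcast1] at h1
    rw [← hC] at h1
    -- h1 : 4^(m+1) ≤ 2 * C * (2 * √(m+1))
    have hCpos : (0:ℝ) ≤ ((2 * m + 1).choose m : ℝ) := Nat.cast_nonneg _
    calc (2:ℝ) ^ (2 * m + 1) = 4 ^ (m + 1) / 2 := by
          rw [pow_succ, pow_mul]; norm_num; ring
      _ ≤ ((2 * m + 1).choose m : ℝ) * (2 * Real.sqrt ((m:ℝ) + 1)) := by linarith
      _ ≤ ((2 * m + 1).choose m : ℝ) * (2 * Real.sqrt ((2 * m + 1 : ℕ) : ℝ)) := by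
          apply mul_le_mul_of_nonneg_left (by linarith) hCpos


private lemma budget0 (m t d L : ℝ) (h1 : 1 ≤ t) (h2 : t ≤ m)
    (h3 : 4*t^2 ≤ d*(2*m)) (h4 : d ≤ 2*m*L - 1)
    (hL1 : 0.6931471803 ≤ L) (hL2 : L ≤ 0.6931471808) :
    200*t^2*(2*m+1) ≤ (1-L+d)*(100*(2*m+1)^2 - 65*(2*t-1)^2) := by
  have hm : (1:ℝ) ≤ m := le_trans h1 h2
  have hQ : (0:ℝ) ≤ 100*(2*m+1)^2 - 65*(2*t-1)^2 := by nlinarith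
  have hd0 : (0:ℝ) ≤ d := by nlinarith
  have hC2 : (0:ℝ) ≤ 4*(0.6931471808:ℝ)*m^2 - 2*m - 4*t^2 := by nlinarith
  have core : 400*m*t^2*(2*m+1) + 225*t^2*(4*(0.6931471808:ℝ)*m^2-2*m-4*t^2)
      ≤ ((1-(0.6931471808:ℝ))*2*m+4*t^2)*(100*(2*m+1)^2-65*(2*t-1)^2) := by
    nlinarith [mul_nonneg (mul_nonneg (by linarith : (0:ℝ) ≤ t-1) (by linarith : (0:ℝ) ≤ m-t)) (mul_nonneg (by linarith : (0:ℝ) ≤ t) (by linarith : (0:ℝ) ≤ m)),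
      mul_nonneg (mul_nonneg (by linarith : (0:ℝ) ≤ t-1) (by linarith : (0:ℝ) ≤ m-t)) (sq_nonneg t),
      mul_nonneg (mul_nonneg (by linarith : (0:ℝ) ≤ t-1) (by linarith : (0:ℝ) ≤ m-t)) (sq_nonneg m),
      mul_nonneg (sq_nonneg (m-t)) (by linarith : (0:ℝ) ≤ m),
      mul_nonneg (sq_nonneg (m-t)) (by linarith : (0:ℝ) ≤ t),
      mul_nonneg (sq_nonneg (t-1)) (by linarith : (0:ℝ) ≤ m),
      mul_nonneg (sq_nonneg (t-1)) (by linarith : (0:ℝ) ≤ t),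
      mul_nonneg (by linarith : (0:ℝ) ≤ m-t) (by linarith : (0:ℝ) ≤ t-1),
      mul_pos (by linarith : (0:ℝ) < t) (by linarith : (0:ℝ) < m),
      sq_nonneg (m-t), sq_nonneg (t-1), sq_nonneg (m*t - m), sq_nonneg (m*t - t)]
  have key : (2*m) * (200*t^2*(2*m+1)) ≤ (2*m) * ((1-L+d)*(100*(2*m+1)^2 - 65*(2*t-1)^2)) := by
    nlinarith [core, mul_nonneg (show (0:ℝ) ≤ 2*m*d - 4*t^2 by linarith) hQ,
      mul_nonneg (mul_nonneg (show (0:ℝ) ≤ 2*m by linarith) (show (0:ℝ) ≤ 0.6931471808 - L by linarith)) hQ,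
      mul_nonneg (show (0:ℝ) ≤ 225*t^2 by positivity) hC2]
  exact (mul_le_mul_iff_right₀ (by linarith : (0:ℝ) < 2*m)).1 key

private lemma budget1 (m t d L : ℝ) (h1 : 1 ≤ t) (h2 : t ≤ m)
    (h3 : (2*t-1)^2 ≤ d*(2*m+1)) (h4 : d ≤ (2*m+1)*L - 1)
    (hL1 : 0.6931471803 ≤ L) (hL2 : L ≤ 0.6931471808) :
    100*t*(t-1)*(m+1) ≤ (1-L+d)*(100*(m+1)^2 - 65*(t-1)^2) := by
  have hm : (1:ℝ) ≤ m := le_trans h1 h2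
  have hQ : (0:ℝ) ≤ 100*(m+1)^2 - 65*(t-1)^2 := by nlinarith
  have hd0 : (0:ℝ) ≤ d := by nlinarith
  have hC1 : (0:ℝ) ≤ (2*m+1)*((2*m+1)*(0.6931471808:ℝ)-1) - (2*t-1)^2 := by nlinarith
  have core : (2*m+1)*(100*t*(t-1)*(m+1)) + 60*t^2*((2*m+1)*((2*m+1)*(0.6931471808:ℝ)-1)-(2*t-1)^2)
      ≤ ((1-(0.6931471808:ℝ))*(2*m+1)+(2*t-1)^2)*(100*(m+1)^2-65*(t-1)^2) := by
    nlinarith [mul_nonneg (mul_nonneg (by linarith : (0:ℝ) ≤ t-1) (by linarith : (0:ℝ) ≤ m-t)) (mul_nonneg (by linarith : (0:ℝ) ≤ t) (by linarith : (0:ℝ) ≤ m)),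
      mul_nonneg (mul_nonneg (by linarith : (0:ℝ) ≤ t-1) (by linarith : (0:ℝ) ≤ m-t)) (sq_nonneg t),
      mul_nonneg (mul_nonneg (by linarith : (0:ℝ) ≤ t-1) (by linarith : (0:ℝ) ≤ m-t)) (sq_nonneg m),
      mul_nonneg (sq_nonneg (m-t)) (by linarith : (0:ℝ) ≤ m),
      mul_nonneg (sq_nonneg (m-t)) (by linarith : (0:ℝ) ≤ t),
      mul_nonneg (sq_nonneg (t-1)) (by linarith : (0:ℝ) ≤ m),
      mul_nonneg (sq_nonneg (t-1)) (by linarith : (0:ℝ) ≤ t),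
      mul_nonneg (by linarith : (0:ℝ) ≤ m-t) (by linarith : (0:ℝ) ≤ t-1),
      mul_pos (by linarith : (0:ℝ) < t) (by linarith : (0:ℝ) < m),
      sq_nonneg (m-t), sq_nonneg (t-1), sq_nonneg (m*t - m), sq_nonneg (m*t - t)]
  have key : (2*m+1) * (100*t*(t-1)*(m+1)) ≤ (2*m+1) * ((1-L+d)*(100*(m+1)^2 - 65*(t-1)^2)) := by
    nlinarith [core, mul_nonneg (show (0:ℝ) ≤ (2*m+1)*d - (2*t-1)^2 by linarith) hQ,
      mul_nonneg (mul_nonneg (show (0:ℝ) ≤ 2*m+1 by linarith) (show (0:ℝ) ≤ 0.6931471808 - L by linarith)) hQ,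
      mul_nonneg (show (0:ℝ) ≤ 60*t^2 by positivity) hC1]
  exact (mul_le_mul_iff_right₀ (by linarith : (0:ℝ) < 2*m+1)).1 key


private lemma case_even (nR mR tR c L g : ℝ) (hn2R : 2 ≤ nR) (ht1R : 1 ≤ tR)
    (htmR : tR ≤ mR) (hg : 0 < g)
    (hgsq : g ^ 2 = (nR + 1 - mR - tR) * (mR + tR))
    (hn2m : nR = 2 * mR)
    (hL1 : (0.6931471803:ℝ) < L) (hL2 : L < 0.6931471808)
    (hL : c ^ 2 + 1 < nR * L)
    (h2te_sq : (2 * tR) ^ 2 ≤ c ^ 2 * nR) :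
    tR ^ 2 ≤ (1 + c ^ 2 - L) * g := by
  have hdn : c ^ 2 * nR ≤ (0.6931471808 * nR - 1) * nR := by
    have h1 : c ^ 2 ≤ 0.6931471808 * nR - 1 := by nlinarith
    have h2 : (0:ℝ) ≤ nR := by linarith
    exact mul_le_mul_of_nonneg_right h1 h2
  have hb0 : 200*tR^2*(2*mR+1) ≤ (1-L+c^2)*(100*(2*mR+1)^2 - 65*(2*tR-1)^2) := by
    apply budget0 mR tR (c^2) L ht1R htmR
    · nlinarith [h2te_sq]
    · rw [hn2m] at hL; linarith
    · linarith
    · linarith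
  set M : ℝ := (nR + 1) / 2 with hMdef
  have hMpos : (0:ℝ) < M := by rw [hMdef]; linarith
  set s' : ℝ := tR - 1/2 with hs'def
  have hprod : (nR + 1 - mR - tR) * (mR + tR) = M ^ 2 - s' ^ 2 := by
    rw [hMdef, hs'def, hn2m]; ring
  have hs'b : s' ^ 2 ≤ 0.6932 * M ^ 2 := by
    rw [hs'def, hMdef]
    nlinarith [h2te_sq, hdn, hn2R, ht1R]
  have hchordsq : (M ^ 2 - 0.65 * s' ^ 2) ^ 2 ≤ (M * g) ^ 2 := by
    have : (M * g) ^ 2 = M ^ 2 * (M ^ 2 - s' ^ 2) := by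
      rw [mul_pow, hgsq, hprod]
    rw [this]
    nlinarith [hs'b, sq_nonneg s', sq_nonneg M, mul_nonneg (sq_nonneg s') (sq_nonneg M)]
  have hchord : M ^ 2 - 0.65 * s' ^ 2 ≤ M * g := by
    have h0 : (0:ℝ) ≤ M ^ 2 - 0.65 * s' ^ 2 := by nlinarith [hs'b, sq_nonneg M]
    calc M ^ 2 - 0.65 * s' ^ 2 = Real.sqrt ((M ^ 2 - 0.65 * s' ^ 2) ^ 2) :=
          (Real.sqrt_sq h0).symm
      _ ≤ Real.sqrt ((M * g) ^ 2) := Real.sqrt_le_sqrt hchordsq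
      _ = M * g := Real.sqrt_sq (by positivity)
  have hBM : tR^2 * M ≤ (1 - L + c^2) * (M ^ 2 - 0.65 * s' ^ 2) := by
    have hrw : (1 - L + c^2) * (100*(2*mR+1)^2 - 65*(2*tR-1)^2)
        = 400 * ((1 - L + c^2) * (M ^ 2 - 0.65 * s' ^ 2)) := by
      rw [hMdef, hs'def, hn2m]; ring
    have hlhs : 200*tR^2*(2*mR+1) = 400 * (tR^2 * M) := by
      rw [hMdef, hn2m]; ring
    rw [hrw, hlhs] at hb0
    linarith
  have hB0 : (0:ℝ) ≤ 1 - L + c^2 := by nlinarith [sq_nonneg c]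
  have hmain : tR^2 * M ≤ ((1 + c^2 - L) * g) * M := by
    calc tR^2 * M ≤ (1 - L + c^2) * (M ^ 2 - 0.65 * s' ^ 2) := hBM
      _ ≤ (1 - L + c^2) * (M * g) := mul_le_mul_of_nonneg_left hchord hB0
      _ = ((1 + c^2 - L) * g) * M := by ring
  exact (mul_le_mul_iff_left₀ hMpos).1 hmain

private lemma case_odd (nR mR tR c L g : ℝ) (hn2R : 2 ≤ nR) (ht1R : 1 ≤ tR)
    (htmR : tR ≤ mR) (hg : 0 < g)
    (hgsq : g ^ 2 = (nR + 1 - mR - tR) * (mR + tR))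
    (hn2m : nR = 2 * mR + 1)
    (hL1 : (0.6931471803:ℝ) < L) (hL2 : L < 0.6931471808)
    (hL : c ^ 2 + 1 < nR * L)
    (h2te_sq : (2 * tR - 1) ^ 2 ≤ c ^ 2 * nR) :
    tR * (tR - 1) ≤ (1 + c ^ 2 - L) * g := by
  have hdn : c ^ 2 * nR ≤ (0.6931471808 * nR - 1) * nR := by
    have h1 : c ^ 2 ≤ 0.6931471808 * nR - 1 := by nlinarith
    have h2 : (0:ℝ) ≤ nR := by linarith
    exact mul_le_mul_of_nonneg_right h1 h2
  have hb1 : 100*tR*(tR-1)*(mR+1) ≤ (1-L+c^2)*(100*(mR+1)^2 - 65*(tR-1)^2) := by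
    apply budget1 mR tR (c^2) L ht1R htmR
    · rw [← hn2m]; exact h2te_sq
    · rw [hn2m] at hL; linarith
    · linarith
    · linarith
  set M : ℝ := (nR + 1) / 2 with hMdef
  have hMpos : (0:ℝ) < M := by rw [hMdef]; linarith
  have hMm : M = mR + 1 := by rw [hMdef, hn2m]; ring
  set s' : ℝ := tR - 1 with hs'def
  have hprod : (nR + 1 - mR - tR) * (mR + tR) = M ^ 2 - s' ^ 2 := by
    rw [hMdef, hs'def, hn2m]; ring
  have hs'b : s' ^ 2 ≤ 0.6932 * M ^ 2 := by
    rw [hs'def, hMdef]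
    nlinarith [h2te_sq, hdn, hn2R, ht1R]
  have hchordsq : (M ^ 2 - 0.65 * s' ^ 2) ^ 2 ≤ (M * g) ^ 2 := by
    have : (M * g) ^ 2 = M ^ 2 * (M ^ 2 - s' ^ 2) := by
      rw [mul_pow, hgsq, hprod]
    rw [this]
    nlinarith [hs'b, sq_nonneg s', sq_nonneg M, mul_nonneg (sq_nonneg s') (sq_nonneg M)]
  have hchord : M ^ 2 - 0.65 * s' ^ 2 ≤ M * g := by
    have h0 : (0:ℝ) ≤ M ^ 2 - 0.65 * s' ^ 2 := by nlinarith [hs'b, sq_nonneg M]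
    calc M ^ 2 - 0.65 * s' ^ 2 = Real.sqrt ((M ^ 2 - 0.65 * s' ^ 2) ^ 2) :=
          (Real.sqrt_sq h0).symm
      _ ≤ Real.sqrt ((M * g) ^ 2) := Real.sqrt_le_sqrt hchordsq
      _ = M * g := Real.sqrt_sq (by positivity)
  have hBM : tR*(tR-1) * M ≤ (1 - L + c^2) * (M ^ 2 - 0.65 * s' ^ 2) := by
    have hrw : (1 - L + c^2) * (100*(mR+1)^2 - 65*(tR-1)^2)
        = 100 * ((1 - L + c^2) * (M ^ 2 - 0.65 * s' ^ 2)) := by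
      rw [hMm, hs'def]; ring
    have hlhs : 100*tR*(tR-1)*(mR+1) = 100 * (tR*(tR-1) * M) := by
      rw [hMm]; ring
    rw [hrw, hlhs] at hb1
    linarith
  have hB0 : (0:ℝ) ≤ 1 - L + c^2 := by nlinarith [sq_nonneg c]
  have hmain : tR*(tR-1) * M ≤ ((1 + c^2 - L) * g) * M := by
    calc tR*(tR-1) * M ≤ (1 - L + c^2) * (M ^ 2 - 0.65 * s' ^ 2) := hBM
      _ ≤ (1 - L + c^2) * (M * g) := mul_le_mul_of_nonneg_left hchord hB0
      _ = ((1 + c^2 - L) * g) * M := by ring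
  exact (mul_le_mul_iff_left₀ hMpos).1 hmain

private lemma aux_main (c : ℝ) (n k : ℕ) (hc : 0 < c) (hn : 0 < n)
    (hk2 : (k:ℝ) ≤ ((n:ℝ) + c * Real.sqrt n) / 2)
    (hL : c ^ 2 + 1 < (n:ℝ) * Real.log 2)
    (hmk : n / 2 ≤ k) :
    Real.exp (-1 - c ^ 2) * 2 ^ n / Real.sqrt n ≤ (n.choose k : ℝ) := by
  have hL1 : (0.6931471803:ℝ) < Real.log 2 := Real.log_two_gt_d9
  have hL2 : Real.log 2 < 0.6931471808 := Real.log_two_lt_d9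
  have hn1 : (1:ℝ) ≤ (n:ℝ) := by exact_mod_cast hn
  have hsq_pos : (0:ℝ) < Real.sqrt n := Real.sqrt_pos.2 (by linarith)
  have hsn : Real.sqrt (n:ℝ) ^ 2 = (n:ℝ) := Real.sq_sqrt (by linarith)
  have hn2 : 2 ≤ n := by
    by_contra hcon
    have : n = 1 := by omega
    rw [this] at hL
    push_cast at hL
    nlinarith [sq_nonneg c]
  have hn2R : (2:ℝ) ≤ (n:ℝ) := by exact_mod_cast hn2
  have hc2n : c ^ 2 < (n:ℝ) := by nlinarith
  have hcsn : c < Real.sqrt n := by nlinarith [hsn, hsq_pos]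
  have hcsn2 : c * Real.sqrt n < (n:ℝ) := by nlinarith [hsq_pos, hcsn, hsn]
  have hkltnR : (k:ℝ) < (n:ℝ) := by linarith
  have hkltn : k < n := by exact_mod_cast hkltnR
  have hkn : k ≤ n := hkltn.le
  set m := n / 2 with hmdef
  set e := n % 2 with hedef
  have hme : 2 * m + e = n := Nat.div_add_mod n 2
  have he01 : e = 0 ∨ e = 1 := by omega
  set t := k - m with htdef
  have hk : k = m + t := by omega
  have htm : t ≤ m := by omega
  have hm1 : 1 ≤ m := by omega
  -- casts
  have hmeR : 2 * (m:ℝ) + (e:ℝ) = (n:ℝ) := by exact_mod_cast hme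
  have hm1R : (1:ℝ) ≤ (m:ℝ) := by exact_mod_cast hm1
  have htmR : (t:ℝ) ≤ (m:ℝ) := by exact_mod_cast htm
  -- chain
  have hchain := chain n m t (by omega) (by omega) t le_rfl
  set g : ℝ := Real.sqrt (((n:ℝ) + 1 - m - t) * ((m:ℝ) + t)) with hgdef
  have hfac1 : (0:ℝ) < (n:ℝ) + 1 - m - t := by
    have : ((m:ℝ) + t) < n + 1 := by
      have : ((m + t : ℕ):ℝ) < (n:ℝ) + 1 := by
        have : m + t ≤ n := by omega
        have := (Nat.cast_le (α := ℝ)).2 this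
        linarith
      push_cast at this
      linarith
    linarith
  have hfac2 : (0:ℝ) < (m:ℝ) + t := by positivity
  have hg : 0 < g := Real.sqrt_pos.2 (mul_pos hfac1 hfac2)
  have hgsq : g ^ 2 = ((n:ℝ) + 1 - m - t) * ((m:ℝ) + t) :=
    Real.sq_sqrt (mul_pos hfac1 hfac2).le
  set L := Real.log 2 with hLdef
  set S : ℝ := (t:ℝ) ^ 2 - ((n:ℝ) - 2 * m) * t with hSdef
  -- the budget step
  have key3 : S ≤ (1 + c ^ 2 - L) * g := by
    rcases Nat.eq_zero_or_pos t with ht0 | ht1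
    · have hS0 : S = 0 := by rw [hSdef, ht0]; push_cast; ring
      rw [hS0]
      apply mul_nonneg _ hg.le
      nlinarith [sq_nonneg c, hL2]
    · have ht1R : (1:ℝ) ≤ (t:ℝ) := by exact_mod_cast ht1
      have h2te : 2 * (t:ℝ) - (e:ℝ) ≤ c * Real.sqrt n := by
        have hkR : ((k:ℕ):ℝ) = (m:ℝ) + t := by exact_mod_cast congrArg (Nat.cast : ℕ → ℝ) hk
        rw [hkR] at hk2
        linarith
      have h2te_pos : (0:ℝ) ≤ 2 * (t:ℝ) - (e:ℝ) := by
        have : (e:ℝ) ≤ 1 := by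
          rcases he01 with h | h <;> rw [h] <;> norm_num
        linarith
      have h2te_sq : (2 * (t:ℝ) - (e:ℝ)) ^ 2 ≤ c ^ 2 * n := by
        have hmul := mul_self_le_mul_self h2te_pos h2te
        nlinarith [hmul, hsn]
      rcases he01 with he0 | he1
      · have hn2m : (n:ℝ) = 2 * m := by
          rw [he0] at hmeR; push_cast at hmeR; linarith
        have hSeq : S = (t:ℝ) ^ 2 := by
          rw [hSdef, hn2m]; ring
        rw [hSeq]
        apply case_even (n:ℝ) (m:ℝ) (t:ℝ) c L g hn2R ht1R htmR hg hgsq hn2m hL1 hL2 hL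
        rw [he0] at h2te_sq; push_cast at h2te_sq
        convert h2te_sq using 2
        ring
      · have hn2m : (n:ℝ) = 2 * m + 1 := by
          rw [he1] at hmeR; push_cast at hmeR; linarith
        have hSeq : S = (t:ℝ) * ((t:ℝ) - 1) := by
          rw [hSdef, hn2m]; ring
        rw [hSeq]
        apply case_odd (n:ℝ) (m:ℝ) (t:ℝ) c L g hn2R ht1R htmR hg hgsq hn2m hL1 hL2 hL
        rw [he1] at h2te_sq; push_cast at h2te_sq
        convert h2te_sq using 2
  -- final assembly
  have hcentral := choose_half_lower n (by omega)
  have hSg : S / g ≤ 1 + c ^ 2 - L := by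
    rw [div_le_iff₀ hg]
    exact key3
  have hexp : Real.exp (L - 1 - c ^ 2) ≤ Real.exp (-(S / g)) := by
    apply Real.exp_le_exp.2
    linarith
  have hexp2 : Real.exp (L - 1 - c ^ 2) = 2 * Real.exp (-1 - c ^ 2) := by
    rw [show L - 1 - c ^ 2 = L + (-1 - c ^ 2) by ring, Real.exp_add, hLdef,
      Real.exp_log two_pos]
  have hCm0 : (0:ℝ) ≤ (n.choose m : ℝ) := Nat.cast_nonneg _
  have hchain' : (n.choose m : ℝ) * Real.exp (-(S / g)) ≤ (n.choose k : ℝ) := by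
    rw [hk]
    exact hchain
  rw [div_le_iff₀ hsq_pos]
  have c1 : (2:ℝ)^n * Real.exp (L - 1 - c ^ 2) ≤ ((n.choose m : ℝ) * (2 * Real.sqrt n)) * Real.exp (-(S / g)) := by
    apply mul_le_mul hcentral hexp (Real.exp_nonneg _) (by positivity)
  have c2 : ((n.choose m : ℝ) * (2 * Real.sqrt n)) * Real.exp (-(S / g))
      = ((n.choose m : ℝ) * Real.exp (-(S / g))) * (2 * Real.sqrt n) := by ring
  have c3 : ((n.choose m : ℝ) * Real.exp (-(S / g))) * (2 * Real.sqrt n) ≤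
      (n.choose k : ℝ) * (2 * Real.sqrt n) := by
    apply mul_le_mul_of_nonneg_right hchain' (by positivity)
  rw [hexp2] at c1
  have c4 : (2:ℝ)^n * (2 * Real.exp (-1 - c ^ 2)) ≤ (n.choose k : ℝ) * (2 * Real.sqrt n) := by
    calc (2:ℝ)^n * (2 * Real.exp (-1 - c ^ 2))
        ≤ ((n.choose m : ℝ) * (2 * Real.sqrt n)) * Real.exp (-(S / g)) := c1
      _ = ((n.choose m : ℝ) * Real.exp (-(S / g))) * (2 * Real.sqrt n) := c2
      _ ≤ (n.choose k : ℝ) * (2 * Real.sqrt n) := c3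
  linarith [c4]


/-- For a positive real `c` and a positive integer `n` with `c·√n < n`,
every natural `k` with `(n - c√n)/2 ≤ k ≤ (n + c√n)/2` satisfies
`C(n, k) ≥ e^{-1-c²} · 2^n/√n`. -/
theorem central_binomial_lower_bound (c : ℝ) (n : ℕ) (hc : 0 < c) (hn : 0 < n)
    (h : c * Real.sqrt n < n) (k : ℕ)
    (hk1 : ((n : ℝ) - c * Real.sqrt n) / 2 ≤ (k : ℝ))
    (hk2 : (k : ℝ) ≤ ((n : ℝ) + c * Real.sqrt n) / 2) :
    (n.choose k : ℝ) ≥ Real.exp (-1 - c ^ 2) * 2 ^ n / Real.sqrt n := by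
  have hn1 : (1:ℝ) ≤ (n:ℝ) := by exact_mod_cast hn
  have hsq_pos : (0:ℝ) < Real.sqrt n := Real.sqrt_pos.2 (by linarith)
  have hsq1 : (1:ℝ) ≤ Real.sqrt n := by
    rw [show (1:ℝ) = Real.sqrt 1 by rw [Real.sqrt_one]]
    exact Real.sqrt_le_sqrt hn1
  have hkltnR : (k:ℝ) < (n:ℝ) := by linarith
  have hkn : k ≤ n := (by exact_mod_cast hkltnR : k < n).le
  rcases le_or_gt (Real.exp (-1 - c ^ 2) * 2 ^ n / Real.sqrt n) 1 with htriv | hbig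
  · have h1 : (1:ℝ) ≤ (n.choose k : ℝ) := by
      exact_mod_cast Nat.succ_le_of_lt (Nat.choose_pos hkn)
    unfold GE.ge
    linarith
  · have h2n : (2:ℝ) ^ n = Real.exp ((n:ℝ) * Real.log 2) := by
      rw [Real.exp_nat_mul, Real.exp_log two_pos]
    have hL : c ^ 2 + 1 < (n:ℝ) * Real.log 2 := by
      have hlt : Real.sqrt n < Real.exp (-1 - c ^ 2) * 2 ^ n := by
        rw [lt_div_iff₀ hsq_pos] at hbig
        linarith
      have : (1:ℝ) < Real.exp ((-1 - c ^ 2) + (n:ℝ) * Real.log 2) := by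
        rw [Real.exp_add, ← h2n]
        linarith
      have := Real.one_lt_exp_iff.1 this
      linarith
    rcases le_or_gt (n / 2) k with hmk | hmk
    · exact aux_main c n k hc hn hk2 hL hmk
    · have hsym : n.choose (n - k) = n.choose k := Nat.choose_symm hkn
      rw [ge_iff_le, ← hsym]
      have hcast : ((n - k : ℕ) : ℝ) = (n:ℝ) - k := by
        push_cast [Nat.cast_sub hkn]
        ring
      apply aux_main c n (n - k) hc hn _ hL _
      · rw [hcast]
        linarith
      · omega
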